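/- Let 0 < η ≤ 1 be such that t₁ and t₃ have no zeros in the disk {|z| < η}. If A ∈ ℂ^{n₁+1} and B ∈ ℂ^{n₃+1} are such that the polynomials P_A and Q_B have no common root in {|z| < η}, then for every z with |z| < η the real Fréchet derivative of F(·,A,B) at z is injective; i.e. F(·,A,B) is an immersion on {|z| < η}. -/

import Mathlib

open Complex ComplexConjugate Metric

/-- The monic-plus-perturbation polynomial `P_A(z) = z^n + Σ_{i=0}^n aᵢ zⁱ`. -/
noncomputable def Ppoly (n : ℕ) (A : Fin (n + 1) → ℂ) (z : ℂ) : ℂ :=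
  z ^ n + ∑ i : Fin (n + 1), A i * z ^ (i : ℕ)

/-- Let `0 < η ≤ 1` with `t₁, t₃` zero-free on `{|z| < η}`. If the
polynomials `P_A` and `Q_B` have no common root in `{|z| < η}`, then the deformed map
`F(·,A,B)` is an immersion on `{|z| < η}`: its real Fréchet derivative is injective there. -/
theorem deformed_map_is_immersion
    (n₁ n₂ n₃ n₄ : ℕ)
    (h12 : n₁ < n₂) (h13 : n₁ < n₃) (h14 : n₁ < n₄) (h32 : n₃ < n₂)
    (hsum : n₁ + n₂ = n₃ + n₄)
    (t₁ t₂ t₃ t₄ f₁ f₂ f₃ f₄ : ℂ → ℂ)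
    (ht₁ : DifferentiableOn ℂ t₁ (ball (0:ℂ) 1))
    (ht₂ : DifferentiableOn ℂ t₂ (ball (0:ℂ) 1))
    (ht₃ : DifferentiableOn ℂ t₃ (ball (0:ℂ) 1))
    (ht₄ : DifferentiableOn ℂ t₄ (ball (0:ℂ) 1))
    (ht₁0 : t₁ 0 ≠ 0) (ht₂0 : t₂ 0 ≠ 0) (ht₃0 : t₃ 0 ≠ 0) (ht₄0 : t₄ 0 ≠ 0)
    (hf₁ : ∀ z ∈ ball (0:ℂ) 1, HasDerivAt f₁ (z ^ n₁ * t₁ z) z)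
    (hf₂ : ∀ z ∈ ball (0:ℂ) 1, HasDerivAt f₂ (z ^ n₂ * t₂ z) z)
    (hf₃ : ∀ z ∈ ball (0:ℂ) 1, HasDerivAt f₃ (z ^ n₃ * t₃ z) z)
    (hf₄ : ∀ z ∈ ball (0:ℂ) 1, HasDerivAt f₄ (z ^ n₄ * t₄ z) z)
    (hconf : ∀ z ∈ ball (0:ℂ) 1,
      (z ^ n₁ * t₁ z) * (z ^ n₂ * t₂ z) + (z ^ n₃ * t₃ z) * (z ^ n₄ * t₄ z) = 0)
    (g₁ g₂ g₃ g₄ : (Fin (n₁ + 1) → ℂ) → (Fin (n₃ + 1) → ℂ) → ℂ → ℂ)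
    (hg₁0 : ∀ A B, g₁ A B 0 = 0) (hg₂0 : ∀ A B, g₂ A B 0 = 0)
    (hg₃0 : ∀ A B, g₃ A B 0 = 0) (hg₄0 : ∀ A B, g₄ A B 0 = 0)
    (hg₁ : ∀ A B, ∀ z ∈ ball (0:ℂ) 1,
      HasDerivAt (g₁ A B) (Ppoly n₁ A z * t₁ z) z)
    (hg₂ : ∀ A B, ∀ z ∈ ball (0:ℂ) 1,
      HasDerivAt (g₂ A B) (z ^ (n₂ - n₃) * (Ppoly n₃ B z * t₂ z)) z)
    (hg₃ : ∀ A B, ∀ z ∈ ball (0:ℂ) 1,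
      HasDerivAt (g₃ A B) (Ppoly n₃ B z * t₃ z) z)
    (hg₄ : ∀ A B, ∀ z ∈ ball (0:ℂ) 1,
      HasDerivAt (g₄ A B) (z ^ (n₄ - n₁) * (Ppoly n₁ A z * t₄ z)) z)
    (FF : (Fin (n₁ + 1) → ℂ) → (Fin (n₃ + 1) → ℂ) → ℂ → ℂ × ℂ)
    (hFF : ∀ A B z, FF A B z =
      (g₁ A B z + conj (g₂ A B z), g₃ A B z + conj (g₄ A B z)))
    (η : ℝ) (hη0 : 0 < η) (hη1 : η ≤ 1)
    (ht₁η : ∀ z : ℂ, ‖z‖ < η → t₁ z ≠ 0)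
    (ht₃η : ∀ z : ℂ, ‖z‖ < η → t₃ z ≠ 0)
    (A : Fin (n₁ + 1) → ℂ) (B : Fin (n₃ + 1) → ℂ)
    (hnocommon : ∀ z : ℂ, ‖z‖ < η → ¬(Ppoly n₁ A z = 0 ∧ Ppoly n₃ B z = 0)) :
    ∀ z : ℂ, ‖z‖ < η → Function.Injective (fderiv ℝ (FF A B) z) := by
  intro z hzη
  have hz1 : z ∈ ball (0:ℂ) 1 := by
    simp only [mem_ball, dist_zero_right]
    linarith
  set P : ℂ := Ppoly n₁ A z with hPdef
  set Q : ℂ := Ppoly n₃ B z with hQdef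
  set c₁ : ℂ := P * t₁ z with hc₁
  set c₂ : ℂ := z ^ (n₂ - n₃) * (Q * t₂ z) with hc₂
  set c₃ : ℂ := Q * t₃ z with hc₃
  set c₄ : ℂ := z ^ (n₄ - n₁) * (P * t₄ z) with hc₄
  -- the candidate derivative
  let m : ℂ → (ℂ →L[ℝ] ℂ) := fun c =>
    (ContinuousLinearMap.smulRight (1 : ℂ →L[ℂ] ℂ) c).restrictScalars ℝ
  let cj : ℂ →L[ℝ] ℂ := Complex.conjCLE.toContinuousLinearMap
  let L : ℂ →L[ℝ] ℂ × ℂ := (m c₁ + cj.comp (m c₂)).prod (m c₃ + cj.comp (m c₄))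
  have D1 : HasFDerivAt (g₁ A B) (m c₁) z :=
    ((hg₁ A B z hz1).hasFDerivAt).restrictScalars ℝ
  have D2 : HasFDerivAt (g₂ A B) (m c₂) z :=
    ((hg₂ A B z hz1).hasFDerivAt).restrictScalars ℝ
  have D3 : HasFDerivAt (g₃ A B) (m c₃) z :=
    ((hg₃ A B z hz1).hasFDerivAt).restrictScalars ℝ
  have D4 : HasFDerivAt (g₄ A B) (m c₄) z :=
    ((hg₄ A B z hz1).hasFDerivAt).restrictScalars ℝ
  have D2' : HasFDerivAt (fun w => conj (g₂ A B w)) (cj.comp (m c₂)) z :=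
    (cj.hasFDerivAt).comp z D2
  have D4' : HasFDerivAt (fun w => conj (g₄ A B w)) (cj.comp (m c₄)) z :=
    (cj.hasFDerivAt).comp z D4
  have DF : HasFDerivAt (FF A B) L z := by
    have hFFeq : FF A B = fun w =>
        (g₁ A B w + conj (g₂ A B w), g₃ A B w + conj (g₄ A B w)) :=
      funext (hFF A B)
    rw [hFFeq]
    exact (D1.add D2').prodMk (D3.add D4')
  rw [DF.fderiv]
  -- it suffices to show the kernel is trivial
  have key : ∀ v : ℂ, L v = 0 → v = 0 := by
    intro v hv
    have happ : ∀ c w : ℂ, (m c) w = w * c := by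
      intro c w
      simp [m, smul_eq_mul]
    have hLv : L v = (v * c₁ + conj (v * c₂), v * c₃ + conj (v * c₄)) := by
      simp only [L, ContinuousLinearMap.prod_apply, ContinuousLinearMap.add_apply,
        ContinuousLinearMap.comp_apply, happ]
      rfl
    rw [hLv, Prod.ext_iff] at hv
    obtain ⟨eq1, eq2⟩ := hv
    simp only [Prod.fst_zero, Prod.snd_zero] at eq1 eq2
    -- basic nonvanishing facts
    have ha : t₁ z ≠ 0 := ht₁η z hzη
    have hc : t₃ z ≠ 0 := ht₃η z hzη
    -- helper: if c₂ = 0 and c₁ ≠ 0 then v = 0 from eq1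
    have from1 : c₂ = 0 → c₁ ≠ 0 → v = 0 := by
      intro h2 h1
      rw [h2, mul_zero, map_zero, add_zero] at eq1
      exact (mul_eq_zero.mp eq1).resolve_right h1
    have from2 : c₄ = 0 → c₃ ≠ 0 → v = 0 := by
      intro h4 h3
      rw [h4, mul_zero, map_zero, add_zero] at eq2
      exact (mul_eq_zero.mp eq2).resolve_right h3
    by_cases hP : P = 0
    · -- then Q ≠ 0, c₄ = 0, c₃ ≠ 0
      have hQ : Q ≠ 0 := fun hQ => hnocommon z hzη ⟨hP, hQ⟩
      exact from2 (by rw [hc₄, hP, zero_mul, mul_zero]) (mul_ne_zero hQ hc)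
    by_cases hQ : Q = 0
    · exact from1 (by rw [hc₂, hQ, zero_mul, mul_zero]) (mul_ne_zero hP ha)
    by_cases hz0 : z = 0
    · exact from1 (by rw [hc₂, hz0, zero_pow (by omega : n₂ - n₃ ≠ 0), zero_mul])
        (mul_ne_zero hP ha)
    by_cases hb : t₂ z = 0
    · exact from1 (by rw [hc₂, hb, mul_zero, mul_zero]) (mul_ne_zero hP ha)
    -- main case: everything nonzero
    have htt : t₁ z * t₂ z + t₃ z * t₄ z = 0 := by
      have h := hconf z hz1
      have e : z ^ (n₃ + n₄) = z ^ (n₁ + n₂) := by rw [hsum]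
      have h2 : z ^ (n₁ + n₂) * (t₁ z * t₂ z + t₃ z * t₄ z) = 0 := by
        rw [pow_add]
        linear_combination h - (t₃ z * t₄ z) * e
      exact (mul_eq_zero.mp h2).resolve_left (pow_ne_zero _ hz0)
    have hd : t₄ z ≠ 0 := by
      intro hd
      rw [hd, mul_zero, add_zero] at htt
      exact (mul_ne_zero ha hb) htt
    by_contra hv0
    -- rewrite c₄'s exponent
    have hk : n₄ - n₁ = n₂ - n₃ := by omega
    rw [hk] at hc₄
    have h1 : conj (v * c₂) = -(v * c₁) := by linear_combination eq1
    have h2 : conj (v * c₄) = -(v * c₃) := by linear_combination eq2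
    have keyc : (v * c₁) * conj (v * c₄) = conj (v * c₂) * (v * c₃) := by
      rw [h1, h2]; ring
    rw [hc₁, hc₂, hc₃, hc₄] at keyc
    simp only [map_mul, map_pow] at keyc
    have hvz : v * conj v * (conj z) ^ (n₂ - n₃) ≠ 0 := by
      apply mul_ne_zero (mul_ne_zero hv0 _) (pow_ne_zero _ _)
      · simpa using hv0
      · simpa using hz0
    have key2 : P * conj P * (t₁ z * conj (t₄ z)) =
        Q * conj Q * (conj (t₂ z) * t₃ z) := by
      apply mul_left_cancel₀ hvz
      linear_combination keyc
    have hcd : t₃ z * t₄ z = -(t₁ z * t₂ z) := by linear_combination htt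
    have key3 : P * conj P * (t₄ z * conj (t₄ z)) * (t₁ z * t₂ z) =
        -(Q * conj Q * (t₂ z * conj (t₂ z)) * (t₁ z * t₂ z)) := by
      linear_combination (t₂ z * t₄ z) * key2 + (Q * conj Q * conj (t₂ z) * t₂ z) * hcd
    have key4 : P * conj P * (t₄ z * conj (t₄ z)) =
        -(Q * conj Q * (t₂ z * conj (t₂ z))) := by
      have hab : t₁ z * t₂ z ≠ 0 := mul_ne_zero ha hb
      apply mul_right_cancel₀ hab
      linear_combination key3
    simp only [Complex.mul_conj] at key4
    have key5 : (Complex.normSq P * Complex.normSq (t₄ z) : ℝ) =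
        -(Complex.normSq Q * Complex.normSq (t₂ z)) := by
      exact_mod_cast key4
    nlinarith [Complex.normSq_pos.mpr hP, Complex.normSq_pos.mpr hd,
      Complex.normSq_pos.mpr hQ, Complex.normSq_pos.mpr hb]
  intro u v huv
  have h0 : L (u - v) = 0 := by rw [map_sub, huv, sub_self]
  have := key _ h0
  exact sub_eq_zero.mp this
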